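/- Let c be a real number with 0 < c ≤ 1 and set L(n) = ⌊c·n⌋. Let P_(L(n)) denote the fraction of matrices A ∈ M_{L(n),n,3} with rank(A) = L(n) (maximal rank). Then limsup_{n→∞} P_(L(n)) ≤ 1 − (exp(−3c) + 3c·exp(−6c) − c·exp(−9c) − 1 + c)/c. -/

import Mathlib

open Finset Filter

attribute [local instance] Classical.propDecidable

/-- `M_{L,n,k}`: the set of `L × n` matrices over `ZMod 2` with exactly `k`
nonzero entries in each row. -/
noncomputable def Mset (L n k : ℕ) : Finset (Matrix (Fin L) (Fin n) (ZMod 2)) :=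
  Finset.univ.filter fun A =>
    ∀ i : Fin L, (Finset.univ.filter fun j : Fin n => A i j ≠ 0).card = k

/-- `Y(A)`: the number of vectors in the kernel of the transpose of `A`. -/
noncomputable def Ycount {L n : ℕ} (A : Matrix (Fin L) (Fin n) (ZMod 2)) : ℕ :=
  Nat.card {u : Fin L → ZMod 2 // Matrix.vecMul u A = 0}

/-- `E_{L,k}(Y)`: the expectation of `Y` over a uniformly random `A ∈ M_{L,n,k}`
(there are `C(n,k)^L` such matrices). -/
noncomputable def EY (n L k : ℕ) : ℝ :=
  (∑ A ∈ Mset L n k, (Ycount A : ℝ)) / (n.choose k : ℝ) ^ L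

/-- `P_(r)`: the fraction of matrices in `M_{L,n,k}` of rank `r`. -/
noncomputable def Prank (n L k r : ℕ) : ℝ :=
  (((Mset L n k).filter fun A => A.rank = r).card : ℝ) / (n.choose k : ℝ) ^ L


open Topology

/-! ### Auxiliary development -/



/-! ### Counting with fixed instances -/

noncomputable def cnt {α : Type*} [Fintype α] (p : α → Prop) : ℕ :=
  (Finset.univ.filter p).card

lemma cnt_eq {α : Type*} [Fintype α] (p : α → Prop) {h : DecidablePred p} :
    (@Finset.filter _ p h Finset.univ).card = cnt p := by
  unfold cnt
  congr 1
  ext a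
  simp only [Finset.mem_filter]

lemma cnt_eq_card {α : Type*} [Fintype α] {p : α → Prop} {t : Finset α}
    (h : ∀ a, p a ↔ a ∈ t) : cnt p = t.card := by
  unfold cnt
  congr 1
  ext a
  simp only [Finset.mem_filter, Finset.mem_univ, true_and]
  exact h a

lemma cnt_congr {α : Type*} [Fintype α] {p q : α → Prop} (h : ∀ a, p a ↔ q a) :
    cnt p = cnt q := by
  unfold cnt
  exact congrArg Finset.card (Finset.filter_congr fun a _ => h a)

noncomputable def supp {n : ℕ} (v : Fin n → ZMod 2) : Finset (Fin n) :=
  Finset.univ.filter fun j => v j ≠ 0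

lemma zmod2_ne_zero (x : ZMod 2) : x ≠ 0 ↔ x = 1 := by revert x; decide

/-- vectors ↔ their supports -/
lemma cnt_supp {n : ℕ} (p : Finset (Fin n) → Prop) :
    cnt (fun v : Fin n → ZMod 2 => p (supp v)) = cnt p := by
  apply Finset.card_bij (fun v _ => supp v)
  · intro v hv
    simp only [mem_filter, mem_univ, true_and] at hv ⊢
    exact hv
  · intro v hv w hw h
    funext j
    have key : ∀ u : Fin n → ZMod 2, ∀ j, u j = if j ∈ supp u then 1 else 0 := by
      intro u j
      by_cases h : u j = 0
      · simp [supp, h]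
      · simp [supp, h, (zmod2_ne_zero _).mp h]
    rw [key v j, key w j, h]
  · intro s hs
    refine ⟨fun j => if j ∈ s then 1 else 0, ?_, ?_⟩
    · simp only [mem_filter, mem_univ, true_and] at hs ⊢
      convert hs using 2
      ext j
      by_cases h : j ∈ s <;> simp [supp, h]
    · ext j
      by_cases h : j ∈ s <;> simp [supp, h]

lemma cnt_subsets_avoid {n : ℕ} (T : Finset (Fin n)) :
    cnt (fun s : Finset (Fin n) => s.card = 3 ∧ ∀ j ∈ T, j ∉ s) = (n - T.card).choose 3 := by
  have he : ∀ s : Finset (Fin n), (s.card = 3 ∧ ∀ j ∈ T, j ∉ s) ↔ s ∈ Finset.powersetCard 3 Tᶜ := by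
    intro s
    simp only [Finset.mem_powersetCard, Finset.subset_iff, Finset.mem_compl]
    tauto
  rw [cnt_eq_card he, Finset.card_powersetCard, Finset.card_compl, Fintype.card_fin]

lemma cnt_subsets_contain {n : ℕ} (T : Finset (Fin n)) (hT : T.card ≤ 3) :
    cnt (fun s : Finset (Fin n) => s.card = 3 ∧ T ⊆ s)
      = (n - T.card).choose (3 - T.card) := by
  have h2 : (Finset.powersetCard (3 - T.card) Tᶜ).card = (n - T.card).choose (3 - T.card) := by
    rw [Finset.card_powersetCard, Finset.card_compl, Fintype.card_fin]
  rw [← h2]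
  show Finset.card _ = _
  apply Finset.card_bij' (fun s _ => s \ T) (fun u _ => u ∪ T)
  · intro s hs
    simp only [mem_filter, mem_univ, true_and] at hs
    simp only [Finset.mem_powersetCard]
    constructor
    · intro j hj
      simp only [Finset.mem_sdiff] at hj
      simp [Finset.mem_compl, hj.2]
    · rw [Finset.card_sdiff_of_subset hs.2, hs.1]
  · intro u hu
    simp only [Finset.mem_powersetCard] at hu
    have hdisj : Disjoint u T := by
      rw [Finset.disjoint_left]
      intro j hj
      have := hu.1 hj
      simpa [Finset.mem_compl] using this
    simp only [mem_filter, mem_univ, true_and]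
    constructor
    · rw [Finset.card_union_of_disjoint hdisj, hu.2]
      omega
    · exact Finset.subset_union_right
  · intro s hs
    simp only [mem_filter, mem_univ, true_and] at hs
    rw [Finset.sdiff_union_self_eq_union, Finset.union_eq_left.mpr hs.2]
  · intro u hu
    simp only [Finset.mem_powersetCard] at hu
    have hdisj : Disjoint u T := by
      rw [Finset.disjoint_left]
      intro j hj
      have := hu.1 hj
      simpa [Finset.mem_compl] using this
    rw [Finset.union_sdiff_cancel_right hdisj]

lemma cnt_w3 (n : ℕ) :
    cnt (fun v : Fin n → ZMod 2 => (supp v).card = 3) = n.choose 3 := by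
  rw [cnt_supp (fun s => s.card = 3)]
  have he : ∀ s : Finset (Fin n), s.card = 3 ↔ s ∈ Finset.powersetCard 3 (Finset.univ : Finset (Fin n)) := by
    intro s; simp [Finset.mem_powersetCard]
  rw [cnt_eq_card he, Finset.card_powersetCard, Finset.card_univ, Fintype.card_fin]

lemma cnt_w3_avoid {n : ℕ} (T : Finset (Fin n)) :
    cnt (fun v : Fin n → ZMod 2 => (supp v).card = 3 ∧ ∀ j ∈ T, v j = 0)
      = (n - T.card).choose 3 := by
  have he := cnt_congr (fun v : Fin n → ZMod 2 => by
    simp [supp] :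
    ∀ v : Fin n → ZMod 2, ((supp v).card = 3 ∧ ∀ j ∈ T, v j = 0)
      ↔ ((fun s => s.card = 3 ∧ ∀ j ∈ T, j ∉ s) (supp v)))
  rw [he, cnt_supp (fun s => s.card = 3 ∧ ∀ j ∈ T, j ∉ s), cnt_subsets_avoid]

lemma cnt_w3_contain {n : ℕ} (T : Finset (Fin n)) (hT : T.card ≤ 3) :
    cnt (fun v : Fin n → ZMod 2 => (supp v).card = 3 ∧ ∀ j ∈ T, v j ≠ 0)
      = (n - T.card).choose (3 - T.card) := by
  have he := cnt_congr (fun v : Fin n → ZMod 2 => by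
    simp [supp, Finset.subset_iff] :
    ∀ v : Fin n → ZMod 2, ((supp v).card = 3 ∧ ∀ j ∈ T, v j ≠ 0)
      ↔ ((fun s => s.card = 3 ∧ T ⊆ s) (supp v)))
  rw [he, cnt_supp (fun s => s.card = 3 ∧ T ⊆ s), cnt_subsets_contain T hT]

lemma cnt_rowwise {L n : ℕ} (P : Fin L → (Fin n → ZMod 2) → Prop) :
    cnt (fun A : Matrix (Fin L) (Fin n) (ZMod 2) => ∀ i, P i (A i))
      = ∏ i, cnt (fun v => P i v) := by
  unfold cnt
  rw [← Fintype.card_piFinset]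
  apply Finset.card_bij' (fun A _ => Matrix.of.symm A) (fun f _ => Matrix.of f)
  · intro A hA
    simp only [mem_filter, mem_univ, true_and] at hA
    simp only [Fintype.mem_piFinset, mem_filter, mem_univ, true_and]
    exact hA
  · intro f hf
    simp only [Fintype.mem_piFinset, mem_filter, mem_univ, true_and] at hf ⊢
    exact hf
  · intro A _; rfl
  · intro f _; rfl

/-! ### Counting inside `Mset` -/

noncomputable def cntM (L n : ℕ) (q : Matrix (Fin L) (Fin n) (ZMod 2) → Prop) : ℕ :=
  ((Mset L n 3).filter fun A => q A).card

lemma cntM_eq {L n : ℕ} (q : Matrix (Fin L) (Fin n) (ZMod 2) → Prop) {h : DecidablePred q} :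
    (@Finset.filter _ q h (Mset L n 3)).card = cntM L n q := by
  unfold cntM
  congr 1
  ext a
  simp only [Finset.mem_filter]

lemma cntM_congr {L n : ℕ} {p q : Matrix (Fin L) (Fin n) (ZMod 2) → Prop}
    (h : ∀ A, A ∈ Mset L n 3 → (p A ↔ q A)) : cntM L n p = cntM L n q :=
  congrArg Finset.card (Finset.filter_congr h)

lemma cntM_eq_cnt {L n : ℕ} (q : Matrix (Fin L) (Fin n) (ZMod 2) → Prop) :
    cntM L n q = cnt (fun A : Matrix (Fin L) (Fin n) (ZMod 2) =>
      (∀ i, (supp (A i)).card = 3) ∧ q A) := by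
  unfold cntM cnt
  apply congrArg Finset.card
  ext A
  simp only [Finset.mem_filter, Mset, Finset.mem_univ, true_and, supp]
  simp

lemma cntM_rowwise {L n : ℕ} (P : Fin L → (Fin n → ZMod 2) → Prop) :
    cntM L n (fun A => ∀ i, P i (A i))
      = ∏ i, cnt (fun v : Fin n → ZMod 2 => (supp v).card = 3 ∧ P i v) := by
  rw [cntM_eq_cnt, ← cnt_rowwise (fun i v => (supp v).card = 3 ∧ P i v)]
  exact cnt_congr fun A => forall_and.symm

lemma count_Mset (L n : ℕ) : (Mset L n 3).card = n.choose 3 ^ L := by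
  have h0 : cntM L n (fun _ => True) = (Mset L n 3).card := by
    unfold cntM
    congr 1
    ext A
    simp only [Finset.mem_filter, and_true]
  rw [← h0]
  refine Eq.trans (cntM_congr (p := fun _ => True)
    (q := fun A => ∀ i : Fin L, True) (fun A _ => by simp)) ?_
  refine Eq.trans (cntM_rowwise (fun _ _ => True)) ?_
  have hrow : ∀ i ∈ (Finset.univ : Finset (Fin L)),
      cnt (fun v : Fin n → ZMod 2 => (supp v).card = 3 ∧ True) = n.choose 3 :=
    fun i _ => Eq.trans (cnt_congr fun v => by simp) (cnt_w3 n)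
  rw [Finset.prod_congr rfl hrow, Finset.prod_const, Finset.card_univ, Fintype.card_fin]

lemma count_zero_col {L n : ℕ} (j : Fin n) :
    cntM L n (fun A => ∀ i, A i j = 0) = ((n-1).choose 3) ^ L := by
  refine Eq.trans (cntM_rowwise (fun _ v => v j = 0)) ?_
  have base := cnt_w3_avoid ({j} : Finset (Fin n))
  rw [Finset.card_singleton] at base
  have hrow : ∀ i ∈ (Finset.univ : Finset (Fin L)),
      cnt (fun v : Fin n → ZMod 2 => (supp v).card = 3 ∧ v j = 0) = (n-1).choose 3 :=
    fun i _ => Eq.trans (cnt_congr fun v => by simp) base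
  rw [Finset.prod_congr rfl hrow, Finset.prod_const, Finset.card_univ, Fintype.card_fin]

lemma count_special {L n : ℕ} (i : Fin L) (s : Finset (Fin n)) (hs : s.card ≤ 3) :
    cntM L n (fun A => (∀ j ∈ s, A i j ≠ 0) ∧ ∀ i', i' ≠ i → ∀ j ∈ s, A i' j = 0)
      = (n - s.card).choose (3 - s.card) * ((n - s.card).choose 3) ^ (L-1) := by
  have he : cntM L n (fun A => (∀ j ∈ s, A i j ≠ 0) ∧ ∀ i', i' ≠ i → ∀ j ∈ s, A i' j = 0)
      = cntM L n (fun A => ∀ i',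
          (i' = i → ∀ j ∈ s, A i' j ≠ 0) ∧ (i' ≠ i → ∀ j ∈ s, A i' j = 0)) := by
    apply cntM_congr
    intro A _
    constructor
    · rintro ⟨h1, h2⟩ i'
      refine ⟨fun hii => ?_, fun hii => h2 i' hii⟩
      subst hii; exact h1
    · intro h
      exact ⟨(h i).1 rfl, fun i' hii => (h i').2 hii⟩
  rw [he, cntM_rowwise (fun i' v => (i' = i → ∀ j ∈ s, v j ≠ 0) ∧ (i' ≠ i → ∀ j ∈ s, v j = 0))]
  rw [Finset.prod_eq_mul_prod_sdiff_singleton_of_mem (Finset.mem_univ i)]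
  have hi : cnt (fun v : Fin n → ZMod 2 =>
      (supp v).card = 3 ∧ (i = i → ∀ j ∈ s, v j ≠ 0) ∧ (i ≠ i → ∀ j ∈ s, v j = 0))
      = (n - s.card).choose (3 - s.card) :=
    Eq.trans (cnt_congr fun v => by simp) (cnt_w3_contain s hs)
  have hrest : ∀ i' ∈ Finset.univ \ {i}, cnt (fun v : Fin n → ZMod 2 =>
      (supp v).card = 3 ∧ (i' = i → ∀ j ∈ s, v j ≠ 0) ∧ (i' ≠ i → ∀ j ∈ s, v j = 0))
      = (n - s.card).choose 3 := by
    intro i' hi'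
    have hne : i' ≠ i := by simpa using hi'
    exact Eq.trans (cnt_congr fun v => by simp [hne]) (cnt_w3_avoid s)
  rw [hi, Finset.prod_congr rfl hrest, Finset.prod_const]
  congr 1
  rw [Finset.card_sdiff_of_subset (by simp), Finset.card_univ, Fintype.card_fin]
  simp



noncomputable def Zset {L n : ℕ} (A : Matrix (Fin L) (Fin n) (ZMod 2)) : Finset (Fin n) :=
  Finset.univ.filter fun j => ∀ i, A i j = 0

noncomputable def Dset {L n : ℕ} (A : Matrix (Fin L) (Fin n) (ZMod 2)) (i : Fin L) :
    Finset (Fin n) :=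
  Finset.univ.filter fun j => A i j ≠ 0 ∧ ∀ i', i' ≠ i → A i' j = 0

lemma rank_add_le {L n : ℕ} (A : Matrix (Fin L) (Fin n) (ZMod 2)) :
    A.rank + (Zset A).card + ∑ i, ((Dset A i).card - 1) ≤ n := by
  classical
  set colf : Fin n → (Fin L → ZMod 2) := fun j => A.transpose j with hcolf
  set T : Finset (Fin L → ZMod 2) := Finset.image colf Finset.univ with hT
  set fib : (Fin L → ZMod 2) → ℕ := fun v => (Finset.univ.filter fun j => colf j = v).card
    with hfib
  -- rank bound
  have hrank : A.rank ≤ (T.erase 0).card := by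
    rw [Matrix.rank_eq_finrank_span_cols]
    have hr : Set.range A.transpose = (↑T : Set (Fin L → ZMod 2)) := by
      rw [hT, Finset.coe_image, Finset.coe_univ, Set.image_univ]
    have hsp : Submodule.span (ZMod 2) (↑T : Set (Fin L → ZMod 2))
        = Submodule.span (ZMod 2) (↑(T.erase 0) : Set (Fin L → ZMod 2)) := by
      by_cases h0 : (0 : Fin L → ZMod 2) ∈ T
      · conv_lhs => rw [← Finset.insert_erase h0]
        rw [Finset.coe_insert, Submodule.span_insert_zero]
      · rw [Finset.erase_eq_of_notMem h0]
    rw [show Set.range A.col = (↑T : Set (Fin L → ZMod 2)) from hr, hsp]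
    have := finrank_span_finset_le_card (R := ZMod 2) (T.erase 0)
    rwa [Set.finrank] at this
  -- fibers
  have hfib1 : ∀ v ∈ T, 1 ≤ fib v := by
    intro v hv
    rw [hT] at hv
    obtain ⟨j, _, hj⟩ := Finset.mem_image.mp hv
    have : j ∈ Finset.univ.filter fun j => colf j = v := by simp [hj]
    exact Finset.card_pos.mpr ⟨j, this⟩
  have hsum : ∑ v ∈ T, fib v = n := by
    rw [hT, hfib]
    rw [← Finset.card_eq_sum_card_image colf Finset.univ]
    simp
  -- Zset is the fiber of 0
  have hZ : (Zset A).card = fib 0 := by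
    congr 1
    ext j
    simp only [Zset, Finset.mem_filter, Finset.mem_univ, true_and, hcolf]
    constructor
    · intro h; funext i; simpa using h i
    · intro h i; exact congrFun h i
  -- the special vectors
  set ei : Fin L → (Fin L → ZMod 2) := fun i => Pi.single i 1 with hei
  have heine : ∀ i, ei i ≠ 0 := by
    intro i h
    have := congrFun h i
    simp [hei] at this
  have heiinj : Function.Injective ei := by
    intro i i' h
    by_contra hne
    have := congrFun h i
    simp [hei, Pi.single_eq_same, Pi.single_eq_of_ne hne] at this
  have hDsub : ∀ i, Dset A i ⊆ Finset.univ.filter fun j => colf j = ei i := by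
    intro i j hj
    simp only [Dset, Finset.mem_filter, Finset.mem_univ, true_and] at hj
    simp only [Finset.mem_filter, Finset.mem_univ, true_and]
    funext i'
    by_cases h : i' = i
    · subst h
      simp [hcolf, hei, Pi.single_eq_same, (zmod2_ne_zero _).mp hj.1, Matrix.transpose_apply]
    · simp [hcolf, hei, Pi.single_eq_of_ne h, hj.2 i' h, Matrix.transpose_apply]
  set I : Finset (Fin L) := Finset.univ.filter fun i => (Dset A i).Nonempty with hI
  have heiT : ∀ i ∈ I, ei i ∈ T.erase 0 := by
    intro i hi
    simp only [hI, Finset.mem_filter, Finset.mem_univ, true_and] at hi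
    obtain ⟨j, hj⟩ := hi
    refine Finset.mem_erase.mpr ⟨heine i, ?_⟩
    have := hDsub i hj
    simp only [Finset.mem_filter, Finset.mem_univ, true_and] at this
    exact Finset.mem_image.mpr ⟨j, Finset.mem_univ j, this⟩
  -- main counting chain
  have key : (T.erase 0).card + (Zset A).card + ∑ i, ((Dset A i).card - 1) ≤ n := by
    have hsplit : (Zset A).card + ∑ v ∈ T.erase 0, fib v ≤ n := by
      by_cases h0 : (0 : Fin L → ZMod 2) ∈ T
      · have h' : ∑ v ∈ T.erase 0, fib v + fib 0 = ∑ v ∈ T, fib v :=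
          Finset.sum_erase_add T fib h0
        omega
      · have herase : T.erase 0 = T := Finset.erase_eq_of_notMem h0
        rw [herase]
        have : fib 0 = 0 := by
          rw [hfib]
          apply Finset.card_eq_zero.mpr
          apply Finset.filter_eq_empty_iff.mpr
          intro j _
          intro hj
          exact h0 (Finset.mem_image.mpr ⟨j, Finset.mem_univ j, hj⟩)
        omega
    have hlower : (T.erase 0).card + ∑ i, ((Dset A i).card - 1) ≤ ∑ v ∈ T.erase 0, fib v := by
      have h1 : ∑ v ∈ T.erase 0, fib v = (T.erase 0).card + ∑ v ∈ T.erase 0, (fib v - 1) := by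
        rw [Finset.card_eq_sum_ones, ← Finset.sum_add_distrib]
        apply Finset.sum_congr rfl
        intro v hv
        have := hfib1 v (Finset.mem_of_mem_erase hv)
        omega
      have h2 : ∑ i, ((Dset A i).card - 1) ≤ ∑ v ∈ T.erase 0, (fib v - 1) := by
        have e1 : ∑ i, ((Dset A i).card - 1) = ∑ i ∈ I, ((Dset A i).card - 1) := by
          symm
          apply Finset.sum_subset (Finset.subset_univ I)
          intro i _ hi
          simp only [hI, Finset.mem_filter, Finset.mem_univ, true_and,
            Finset.not_nonempty_iff_eq_empty] at hi
          simp [hi]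
        have e2 : ∑ i ∈ I, ((Dset A i).card - 1) ≤ ∑ i ∈ I, (fib (ei i) - 1) := by
          apply Finset.sum_le_sum
          intro i _
          have := Finset.card_le_card (hDsub i)
          have h' : fib (ei i) = (Finset.univ.filter fun j => colf j = ei i).card := rfl
          omega
        have e3 : ∑ i ∈ I, (fib (ei i) - 1) = ∑ v ∈ I.image ei, (fib v - 1) := by
          rw [Finset.sum_image (fun i _ i' _ h => heiinj h)]
        have e4 : ∑ v ∈ I.image ei, (fib v - 1) ≤ ∑ v ∈ T.erase 0, (fib v - 1) := by
          apply Finset.sum_le_sum_of_subset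
          intro v hv
          obtain ⟨i, hi, rfl⟩ := Finset.mem_image.mp hv
          exact heiT i hi
        omega
      omega
    omega
  omega


/-! ### Summed expectations -/

lemma sum_Zset (L n : ℕ) :
    ∑ A ∈ Mset L n 3, (Zset A).card = n * ((n-1).choose 3) ^ L := by
  have h1 : ∀ A : Matrix (Fin L) (Fin n) (ZMod 2),
      (Zset A).card = ∑ j : Fin n, if (∀ i, A i j = 0) then 1 else 0 := by
    intro A
    rw [Zset, Finset.card_filter]
  calc ∑ A ∈ Mset L n 3, (Zset A).card
      = ∑ A ∈ Mset L n 3, ∑ j : Fin n, if (∀ i, A i j = 0) then 1 else 0 := by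
        exact Finset.sum_congr rfl fun A _ => h1 A
    _ = ∑ j : Fin n, ∑ A ∈ Mset L n 3, if (∀ i, A i j = 0) then 1 else 0 :=
        Finset.sum_comm
    _ = ∑ j : Fin n, ((n-1).choose 3) ^ L := by
        refine Finset.sum_congr rfl fun j _ => ?_
        rw [← Finset.card_filter, cntM_eq, count_zero_col]
    _ = n * ((n-1).choose 3) ^ L := by
        rw [Finset.sum_const, Finset.card_univ, Fintype.card_fin, smul_eq_mul]

lemma Dset_subset {L n : ℕ} {A : Matrix (Fin L) (Fin n) (ZMod 2)} (hA : A ∈ Mset L n 3)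
    (i : Fin L) : (Dset A i).card ≤ 3 := by
  simp only [Mset, Finset.mem_filter, Finset.mem_univ, true_and] at hA
  rw [← hA i]
  apply Finset.card_le_card
  intro j hj
  simp only [Dset, Finset.mem_filter, Finset.mem_univ, true_and] at hj ⊢
  exact hj.1

lemma sum_Dset_choose (L n : ℕ) (i : Fin L) (k : ℕ) (hk : k ≤ 3) :
    ∑ A ∈ Mset L n 3, ((Dset A i).card.choose k)
      = n.choose k * ((n - k).choose (3 - k) * ((n - k).choose 3) ^ (L-1)) := by
  have h1 : ∀ A ∈ Mset L n 3, (Dset A i).card.choose k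
      = ∑ s ∈ Finset.powersetCard k (Finset.univ : Finset (Fin n)),
          if s ⊆ Dset A i then 1 else 0 := by
    intro A _
    rw [← Finset.card_filter, ← Finset.card_powersetCard]
    congr 1
    ext s
    simp only [Finset.mem_filter, Finset.mem_powersetCard, Finset.subset_univ, true_and]
    tauto
  calc ∑ A ∈ Mset L n 3, ((Dset A i).card.choose k)
      = ∑ A ∈ Mset L n 3, ∑ s ∈ Finset.powersetCard k (Finset.univ : Finset (Fin n)),
          if s ⊆ Dset A i then 1 else 0 := Finset.sum_congr rfl h1
    _ = ∑ s ∈ Finset.powersetCard k (Finset.univ : Finset (Fin n)),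
          ∑ A ∈ Mset L n 3, if s ⊆ Dset A i then 1 else 0 := Finset.sum_comm
    _ = ∑ s ∈ Finset.powersetCard k (Finset.univ : Finset (Fin n)),
          ((n - k).choose (3 - k) * ((n - k).choose 3) ^ (L-1)) := by
        refine Finset.sum_congr rfl fun s hs => ?_
        have hcard : s.card = k := (Finset.mem_powersetCard.mp hs).2
        rw [← Finset.card_filter, cntM_eq]
        rw [cntM_congr (q := fun A => (∀ j ∈ s, A i j ≠ 0) ∧
            ∀ i', i' ≠ i → ∀ j ∈ s, A i' j = 0) ?_]
        · rw [count_special i s (by omega), hcard]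
        · intro A _
          simp only [Finset.subset_iff, Dset, Finset.mem_filter, Finset.mem_univ, true_and]
          constructor
          · intro h
            exact ⟨fun j hj => (h hj).1, fun i' hi' j hj => (h hj).2 i' hi'⟩
          · intro h j hj
            exact ⟨h.1 j hj, fun i' hi' => h.2 i' hi' j hj⟩
    _ = n.choose k * ((n - k).choose (3 - k) * ((n - k).choose 3) ^ (L-1)) := by
        rw [Finset.sum_const, Finset.card_powersetCard, Finset.card_univ, Fintype.card_fin,
          smul_eq_mul]

lemma choose_id_real (d : ℕ) (hd : d ≤ 3) :
    ((d - 1 : ℕ) : ℝ) = (d.choose 2 : ℝ) - (d.choose 3 : ℝ) := by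
  interval_cases d <;> norm_num [Nat.choose]

/-- The master pointwise inequality, summed. -/
lemma master (n L : ℕ) (hL : 1 ≤ L) (hn : 3 ≤ n) :
    Prank n L 3 L ≤ 1 - (((n:ℝ) * ((n-1).choose 3:ℝ) ^ L
        + (L:ℝ) * (3 * (n.choose 3 : ℝ) * ((n-2).choose 3 : ℝ) ^ (L-1))
        - (L:ℝ) * ((n.choose 3 : ℝ) * ((n-3).choose 3 : ℝ) ^ (L-1))
        + ((n.choose 3:ℝ)) ^ L * ((L:ℝ) - (n:ℝ))) / ((L:ℝ) * (n.choose 3:ℝ) ^ L)) := by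
  have hb : (0:ℝ) < (n.choose 3 : ℝ) ^ L := by
    exact pow_pos (by exact_mod_cast Nat.choose_pos hn) L
  have hL' : (0:ℝ) < (L:ℝ) := by exact_mod_cast hL
  -- pointwise inequality
  have hpoint : ∀ A ∈ Mset L n 3,
      ((Zset A).card : ℝ)
        + ((∑ i, ((Dset A i).card.choose 2 : ℝ)) - ∑ i, ((Dset A i).card.choose 3 : ℝ))
        + ((L:ℝ) - (n:ℝ))
      ≤ (if A.rank = L then (0:ℝ) else (L:ℝ)) := by
    intro A hA
    have hS : (∑ i, ((Dset A i).card.choose 2 : ℝ)) - ∑ i, ((Dset A i).card.choose 3 : ℝ)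
        = ((∑ i, ((Dset A i).card - 1) : ℕ) : ℝ) := by
      rw [← Finset.sum_sub_distrib, Nat.cast_sum]
      refine Finset.sum_congr rfl fun i _ => ?_
      exact (choose_id_real _ (Dset_subset hA i)).symm
    rw [hS]
    have hkey := rank_add_le A
    have hrL : A.rank ≤ L := Matrix.rank_le_height A
    by_cases hr : A.rank = L
    · rw [if_pos hr]
      rw [hr] at hkey
      have : ((L:ℕ):ℝ) + ((Zset A).card : ℝ) + ((∑ i, ((Dset A i).card - 1) : ℕ) : ℝ)
          ≤ (n:ℝ) := by exact_mod_cast hkey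
      linarith
    · rw [if_neg hr]
      have h2 : (Zset A).card + ∑ i, ((Dset A i).card - 1) ≤ n := by omega
      have : ((Zset A).card : ℝ) + ((∑ i, ((Dset A i).card - 1) : ℕ) : ℝ) ≤ (n:ℝ) := by
        exact_mod_cast h2
      linarith
  -- summed inequality
  have hsum := Finset.sum_le_sum hpoint
  -- compute LHS
  have hZr : ∑ A ∈ Mset L n 3, ((Zset A).card : ℝ) = (n:ℝ) * ((n-1).choose 3 : ℝ) ^ L := by
    rw [← Nat.cast_sum, sum_Zset]
    push_cast
    ring
  have hD2 : ∑ A ∈ Mset L n 3, ∑ i, ((Dset A i).card.choose 2 : ℝ)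
      = (L:ℝ) * (3 * (n.choose 3 : ℝ) * ((n-2).choose 3 : ℝ) ^ (L-1)) := by
    rw [Finset.sum_comm]
    have hid : (n.choose 2) * ((n - 2).choose 1 * ((n - 2).choose 3) ^ (L-1))
        = 3 * n.choose 3 * ((n-2).choose 3) ^ (L-1) := by
      rw [Nat.choose_one_right, ← mul_assoc]
      have := Nat.choose_succ_right_eq n 2
      norm_num at this
      have h3 : n.choose 2 * (n - 2) = 3 * n.choose 3 := by omega
      rw [h3]
    have : ∀ i : Fin L, ∑ A ∈ Mset L n 3, ((Dset A i).card.choose 2 : ℝ)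
        = ((3 * n.choose 3 * ((n-2).choose 3) ^ (L-1) : ℕ) : ℝ) := by
      intro i
      rw [← Nat.cast_sum, sum_Dset_choose L n i 2 (by norm_num), hid]
    rw [Finset.sum_congr rfl (fun i _ => this i), Finset.sum_const, Finset.card_univ,
      Fintype.card_fin, nsmul_eq_mul]
    push_cast
    ring
  have hD3 : ∑ A ∈ Mset L n 3, ∑ i, ((Dset A i).card.choose 3 : ℝ)
      = (L:ℝ) * ((n.choose 3 : ℝ) * ((n-3).choose 3 : ℝ) ^ (L-1)) := by
    rw [Finset.sum_comm]
    have : ∀ i : Fin L, ∑ A ∈ Mset L n 3, ((Dset A i).card.choose 3 : ℝ)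
        = ((n.choose 3 * ((n-3).choose 3) ^ (L-1) : ℕ) : ℝ) := by
      intro i
      rw [← Nat.cast_sum, sum_Dset_choose L n i 3 (by norm_num)]
      norm_num
    rw [Finset.sum_congr rfl (fun i _ => this i), Finset.sum_const, Finset.card_univ,
      Fintype.card_fin, nsmul_eq_mul]
    push_cast
    ring
  -- compute RHS
  set G : ℕ := cntM L n (fun A => A.rank = L) with hG
  have hRHS : ∑ A ∈ Mset L n 3, (if A.rank = L then (0:ℝ) else (L:ℝ))
      = (L:ℝ) * ((n.choose 3 : ℝ) ^ L - (G:ℝ)) := by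
    rw [← Finset.sum_filter_add_sum_filter_not (Mset L n 3) (fun A => A.rank = L)]
    have e0 : ∑ A ∈ (Mset L n 3).filter (fun A => A.rank = L),
        (if A.rank = L then (0:ℝ) else (L:ℝ)) = 0 := by
      apply Finset.sum_eq_zero
      intro A hA
      rw [if_pos (Finset.mem_filter.mp hA).2]
    have e1 : ∑ A ∈ (Mset L n 3).filter (fun A => ¬ A.rank = L),
        (if A.rank = L then (0:ℝ) else (L:ℝ))
        = ((Mset L n 3).filter (fun A => ¬ A.rank = L)).card * (L:ℝ) := by
      rw [Finset.sum_congr rfl (fun A hA => if_neg (Finset.mem_filter.mp hA).2),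
        Finset.sum_const, nsmul_eq_mul]
    have e2 : ((Mset L n 3).filter (fun A => A.rank = L)).card
        + ((Mset L n 3).filter (fun A => ¬ A.rank = L)).card = (n.choose 3) ^ L := by
      rw [Finset.card_filter_add_card_filter_not, count_Mset]
    have e3 : ((Mset L n 3).filter (fun A => A.rank = L)).card = G := cntM_eq _
    rw [e0, e1, zero_add]
    have e4 : (((Mset L n 3).filter (fun A => ¬ A.rank = L)).card : ℝ)
        = (n.choose 3 : ℝ) ^ L - (G:ℝ) := by
      rw [e3] at e2
      have : ((Mset L n 3).filter (fun A => ¬ A.rank = L)).card = (n.choose 3) ^ L - G := by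
        omega
      rw [this]
      have hGle : G ≤ (n.choose 3) ^ L := by omega
      push_cast [hGle]
      ring
    rw [e4]
    ring
  -- put it together
  have hconst : ∑ _A ∈ Mset L n 3, ((L:ℝ) - (n:ℝ))
      = ((n.choose 3 : ℝ)) ^ L * ((L:ℝ) - (n:ℝ)) := by
    rw [Finset.sum_const, count_Mset, nsmul_eq_mul]
    push_cast
    ring
  rw [Finset.sum_add_distrib, Finset.sum_add_distrib, Finset.sum_sub_distrib] at hsum
  rw [hZr, hD2, hD3, hRHS, hconst] at hsum
  -- final algebra
  have hPrank : Prank n L 3 L = (G:ℝ) / (n.choose 3 : ℝ) ^ L := by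
    unfold Prank
    rw [cntM_eq]
  rw [hPrank]
  set T : ℝ := (n:ℝ) * ((n-1).choose 3:ℝ) ^ L
        + (L:ℝ) * (3 * (n.choose 3 : ℝ) * ((n-2).choose 3 : ℝ) ^ (L-1))
        - (L:ℝ) * ((n.choose 3 : ℝ) * ((n-3).choose 3 : ℝ) ^ (L-1))
        + ((n.choose 3:ℝ)) ^ L * ((L:ℝ) - (n:ℝ)) with hT
  have key : T ≤ (L:ℝ) * ((n.choose 3 : ℝ) ^ L - (G:ℝ)) := by
    rw [hT]; linarith
  have h2 : 1 - T / ((L:ℝ) * (n.choose 3:ℝ) ^ L) - (G:ℝ) / (n.choose 3 : ℝ) ^ L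
      = ((L:ℝ) * ((n.choose 3 : ℝ) ^ L - (G:ℝ)) - T) / ((L:ℝ) * (n.choose 3:ℝ) ^ L) := by
    field_simp
    ring
  have h3 : (0:ℝ) ≤ 1 - T / ((L:ℝ) * (n.choose 3:ℝ) ^ L) - (G:ℝ) / (n.choose 3 : ℝ) ^ L := by
    rw [h2]
    apply div_nonneg
    · linarith
    · positivity
  linarith


variable {c : ℝ}

lemma inv_nat_lim : Tendsto (fun n : ℕ => ((n:ℝ))⁻¹) atTop (𝓝 0) :=
  tendsto_inv_atTop_zero.comp tendsto_natCast_atTop_atTop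

lemma floor_ratio_lim (hc0 : 0 < c) :
    Tendsto (fun n : ℕ => ((⌊c * n⌋₊ : ℝ)) / n) atTop (𝓝 c) := by
  apply tendsto_of_tendsto_of_tendsto_of_le_of_le'
    (g := fun n : ℕ => c - ((n:ℝ))⁻¹) (h := fun _ => c)
  · simpa using tendsto_const_nhds.sub inv_nat_lim
  · exact tendsto_const_nhds
  · filter_upwards [eventually_gt_atTop 0] with n hn
    have hn' : (0:ℝ) < n := by exact_mod_cast hn
    have h1 : c * n - 1 < (⌊c * n⌋₊ : ℝ) := by
      have := Nat.lt_floor_add_one (c * n)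
      linarith [Nat.lt_floor_add_one (c * n)]
    have h2 : (c - (n:ℝ)⁻¹) * n ≤ (⌊c * n⌋₊ : ℝ) := by
      have he : (c - (n:ℝ)⁻¹) * n = c * n - 1 := by field_simp
      rw [he]
      linarith
    calc c - (n:ℝ)⁻¹ = ((c - (n:ℝ)⁻¹) * n) / n := by field_simp
      _ ≤ ((⌊c * n⌋₊ : ℝ)) / n := by exact div_le_div_of_nonneg_right h2 hn'.le |>.trans_eq rfl
  · filter_upwards [eventually_gt_atTop 0] with n hn
    have hn' : (0:ℝ) < n := by exact_mod_cast hn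
    rw [div_le_iff₀ hn']
    exact Nat.floor_le (by positivity)

lemma tend_aux (t j : ℝ) {e : ℕ → ℕ}
    (he : Tendsto (fun n : ℕ => ((e n : ℝ)) / n) atTop (𝓝 c)) :
    Tendsto (fun n : ℕ => (e n : ℝ) * Real.log (1 - t / ((n:ℝ) - j))) atTop (𝓝 (-(t * c))) := by
  have hshift : Tendsto (fun n : ℕ => (n:ℝ) - j) atTop atTop :=
    tendsto_atTop_add_const_right atTop (-j) tendsto_natCast_atTop_atTop |>.congr
      (fun n => by ring)
  have h3 : Tendsto (fun n : ℕ => ((n:ℝ) - j) * Real.log (1 + (-t) / ((n:ℝ) - j)))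
      atTop (𝓝 (-t)) :=
    (Real.tendsto_mul_log_one_add_div_atTop (-t)).comp hshift
  have h2 : Tendsto (fun n : ℕ => (n:ℝ) / ((n:ℝ) - j)) atTop (𝓝 1) := by
    have hj : Tendsto (fun n : ℕ => j / ((n:ℝ) - j)) atTop (𝓝 0) :=
      (tendsto_const_nhds.div_atTop hshift)
    have : Tendsto (fun n : ℕ => 1 + j / ((n:ℝ) - j)) atTop (𝓝 1) := by
      simpa using tendsto_const_nhds.add hj
    apply this.congr'
    filter_upwards [hshift.eventually_gt_atTop 0] with n hn
    field_simp
    ring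
  have hprod : Tendsto (fun n : ℕ =>
      ((e n : ℝ) / n) * ((n:ℝ) / ((n:ℝ) - j)) * (((n:ℝ) - j) * Real.log (1 + (-t) / ((n:ℝ) - j))))
      atTop (𝓝 (c * 1 * (-t))) := (he.mul h2).mul h3
  have : c * 1 * (-t) = -(t * c) := by ring
  rw [this] at hprod
  apply hprod.congr'
  filter_upwards [hshift.eventually_gt_atTop 0, eventually_gt_atTop 0] with n hn hn0
  have hn0' : (0:ℝ) < n := by exact_mod_cast hn0
  rw [neg_div, ← sub_eq_add_neg]
  field_simp

lemma choose2_nat (m : ℕ) : m.choose 2 * 2 = m * (m - 1) := by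
  induction m with
  | zero => rfl
  | succ k ih =>
    rw [Nat.choose_succ_succ, Nat.choose_one_right, Nat.add_mul, ih]
    rcases k with _ | k
    · rfl
    · simp only [Nat.succ_sub_one]
      ring

lemma choose3_nat (m : ℕ) : m.choose 3 * 6 = m * (m - 1) * (m - 2) := by
  induction m with
  | zero => rfl
  | succ k ih =>
    rw [Nat.choose_succ_succ, Nat.add_mul, ih]
    have h2 := choose2_nat k
    rcases k with _ | _ | k
    · rfl
    · rfl
    · have hs : k + 1 + 1 + 1 - 2 = k + 1 := by omega
      have hs2 : k + 1 + 1 - 2 = k := by omega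
      simp only [Nat.succ_sub_one, hs, hs2] at *
      nlinarith [h2]

lemma choose3_cast (m : ℕ) (hm : 2 ≤ m) :
    ((m.choose 3 : ℕ) : ℝ) = (m:ℝ) * ((m:ℝ) - 1) * ((m:ℝ) - 2) / 6 := by
  have h := choose3_nat m
  have hc : ((m.choose 3 * 6 : ℕ) : ℝ) = ((m * (m - 1) * (m - 2) : ℕ) : ℝ) := by
    exact_mod_cast congrArg (fun x : ℕ => (x:ℝ)) h
  push_cast [Nat.cast_sub (by omega : 1 ≤ m), Nat.cast_sub (by omega : 2 ≤ m)] at hc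
  linarith

lemma tend_q (t : ℕ) {e : ℕ → ℕ} (hc0 : 0 < c)
    (he : Tendsto (fun n : ℕ => ((e n : ℝ)) / n) atTop (𝓝 c)) :
    Tendsto (fun n : ℕ => (((n - t).choose 3 : ℝ) / ((n.choose 3 : ℝ))) ^ (e n))
      atTop (𝓝 (Real.exp (-(3 * (t:ℝ)) * c))) := by
  -- the log of the ratio
  have hlog : Tendsto (fun n : ℕ => (e n : ℝ) *
      (Real.log (1 - (t:ℝ) / ((n:ℝ) - 0)) + Real.log (1 - (t:ℝ) / ((n:ℝ) - 1))
        + Real.log (1 - (t:ℝ) / ((n:ℝ) - 2)))) atTop (𝓝 (-(3 * (t:ℝ)) * c)) := by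
    have h0 := tend_aux (c := c) (t:ℝ) 0 he
    have h1 := tend_aux (c := c) (t:ℝ) 1 he
    have h2 := tend_aux (c := c) (t:ℝ) 2 he
    have := (h0.add h1).add h2
    have harg : -((t:ℝ) * c) + -((t:ℝ) * c) + -((t:ℝ) * c) = -(3 * (t:ℝ)) * c := by ring
    rw [harg] at this
    apply this.congr
    intro n
    ring
  have hexp := (Real.continuous_exp.tendsto _).comp hlog
  apply hexp.congr'
  have hbig : ∀ᶠ n : ℕ in atTop, (t + 3 : ℕ) ≤ n := eventually_ge_atTop _
  filter_upwards [hbig] with n hn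
  have hn3 : (3:ℕ) ≤ n := by omega
  have htn : 2 ≤ n - t := by omega
  have hcast : ((n - t : ℕ) : ℝ) = (n:ℝ) - (t:ℝ) := by
    push_cast [Nat.cast_sub (by omega : t ≤ n)]
    ring
  -- positivity of the three factors
  have hnR : (t + 3 : ℝ) ≤ (n:ℝ) := by exact_mod_cast hn
  have htR : (0:ℝ) ≤ (t:ℝ) := Nat.cast_nonneg t
  have hp : ∀ j : ℝ, 0 ≤ j → j ≤ 2 → (0:ℝ) < 1 - (t:ℝ) / ((n:ℝ) - j) := by
    intro j hj0 hj2
    have hnj : (0:ℝ) < (n:ℝ) - j := by linarith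
    rw [sub_pos, div_lt_one hnj]
    linarith
  have hp0 := hp 0 (by norm_num) (by norm_num)
  have hp1 := hp 1 (by norm_num) (by norm_num)
  have hp2 := hp 2 (by norm_num) (by norm_num)
  have hq : ((n - t).choose 3 : ℝ) / ((n.choose 3 : ℝ))
      = (1 - (t:ℝ) / ((n:ℝ) - 0)) * (1 - (t:ℝ) / ((n:ℝ) - 1)) * (1 - (t:ℝ) / ((n:ℝ) - 2)) := by
    rw [choose3_cast (n - t) htn, choose3_cast n (by omega), hcast]
    have h0 : (n:ℝ) ≠ 0 := by linarith
    have h1 : (n:ℝ) - 1 ≠ 0 := by intro h; linarith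
    have h2 : (n:ℝ) - 2 ≠ 0 := by intro h; linarith
    field_simp
    ring
  show Real.exp ((e n : ℝ) * (Real.log (1 - (t:ℝ) / ((n:ℝ) - 0))
      + Real.log (1 - (t:ℝ) / ((n:ℝ) - 1)) + Real.log (1 - (t:ℝ) / ((n:ℝ) - 2))))
    = (((n - t).choose 3 : ℝ) / ((n.choose 3 : ℝ))) ^ (e n)
  rw [hq, ← Real.log_mul hp0.ne' hp1.ne', ← Real.log_mul (by positivity) hp2.ne',
    Real.exp_nat_mul, Real.exp_log (by positivity)]

lemma raw_eq (n L : ℕ) (hL : 1 ≤ L) (hn : 3 ≤ n) :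
    ((n:ℝ) * ((n-1).choose 3:ℝ) ^ L
        + (L:ℝ) * (3 * (n.choose 3 : ℝ) * ((n-2).choose 3 : ℝ) ^ (L-1))
        - (L:ℝ) * ((n.choose 3 : ℝ) * ((n-3).choose 3 : ℝ) ^ (L-1))
        + ((n.choose 3:ℝ)) ^ L * ((L:ℝ) - (n:ℝ))) / ((L:ℝ) * (n.choose 3:ℝ) ^ L)
      = (n:ℝ) / (L:ℝ) * (((n-1).choose 3:ℝ) / (n.choose 3:ℝ)) ^ L
        + 3 * (((n-2).choose 3:ℝ) / (n.choose 3:ℝ)) ^ (L-1)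
        - (((n-3).choose 3:ℝ) / (n.choose 3:ℝ)) ^ (L-1)
        + ((L:ℝ) - (n:ℝ)) / (L:ℝ) := by
  obtain ⟨M, rfl⟩ : ∃ M, L = M + 1 := ⟨L - 1, by omega⟩
  have hb : (0:ℝ) < (n.choose 3 : ℝ) := by exact_mod_cast Nat.choose_pos hn
  have hM : (0:ℝ) < (M:ℝ) + 1 := by positivity
  simp only [Nat.add_sub_cancel]
  have hL' : ((M + 1 : ℕ) : ℝ) = (M:ℝ) + 1 := by push_cast; ring
  rw [hL']
  rw [div_pow, div_pow, div_pow, pow_succ]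
  field_simp
  ring

/-- For `0 < c ≤ 1` and `L(n) = ⌊c·n⌋`, the probability that a matrix in
`M_{L(n),n,3}` has maximal rank satisfies
`limsup P_(L(n)) ≤ 1 − (e^{−3c} + 3c e^{−6c} − c e^{−9c} − 1 + c)/c`. -/
theorem limsup_Prank_le (c : ℝ) (hc0 : 0 < c) (hc1 : c ≤ 1) :
    limsup (fun n : ℕ => Prank n ⌊c * n⌋₊ 3 ⌊c * n⌋₊) atTop ≤
      1 - (Real.exp (-3 * c) + 3 * c * Real.exp (-6 * c) - c * Real.exp (-9 * c)
        - 1 + c) / c := by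
  set Ln : ℕ → ℕ := fun n => ⌊c * n⌋₊ with hLn
  set h : ℕ → ℝ := fun n =>
    (n:ℝ) / (Ln n :ℝ) * (((n-1).choose 3:ℝ) / (n.choose 3:ℝ)) ^ (Ln n)
      + 3 * (((n-2).choose 3:ℝ) / (n.choose 3:ℝ)) ^ (Ln n - 1)
      - (((n-3).choose 3:ℝ) / (n.choose 3:ℝ)) ^ (Ln n - 1)
      + ((Ln n:ℝ) - (n:ℝ)) / (Ln n:ℝ) with hh
  -- eventual facts
  have hflr := floor_ratio_lim (c := c) hc0
  have hLn1 : ∀ᶠ n : ℕ in atTop, 1 ≤ Ln n := by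
    have hcn : Tendsto (fun n : ℕ => c * n) atTop atTop :=
      Tendsto.const_mul_atTop hc0 tendsto_natCast_atTop_atTop
    filter_upwards [hcn.eventually_ge_atTop 1] with n hn
    exact Nat.le_floor (by exact_mod_cast hn)
  -- limits of the pieces
  have hA : Tendsto (fun n : ℕ => (n:ℝ) / (Ln n : ℝ)) atTop (𝓝 (1/c)) := by
    have := hflr.inv₀ hc0.ne'
    rw [← one_div] at this
    apply this.congr'
    filter_upwards [hLn1, eventually_gt_atTop 0] with n h1 h2
    have hn' : (0:ℝ) < (n:ℝ) := by exact_mod_cast h2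
    have hl' : (0:ℝ) < (Ln n : ℝ) := by exact_mod_cast h1
    rw [inv_div]
  have hq1 := tend_q (c := c) 1 hc0 hflr
  have he' : Tendsto (fun n : ℕ => ((Ln n - 1 : ℕ) : ℝ) / n) atTop (𝓝 c) := by
    have : Tendsto (fun n : ℕ => (Ln n : ℝ)/n - ((n:ℝ))⁻¹) atTop (𝓝 (c - 0)) :=
      hflr.sub inv_nat_lim
    rw [sub_zero] at this
    apply this.congr'
    filter_upwards [hLn1, eventually_gt_atTop 0] with n h1 h2
    have hn' : (0:ℝ) < (n:ℝ) := by exact_mod_cast h2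
    rw [Nat.cast_sub h1]
    push_cast
    field_simp
  have hq2 := tend_q (c := c) 2 hc0 he'
  have hq3 := tend_q (c := c) 3 hc0 he'
  have hB : Tendsto (fun n : ℕ => ((Ln n:ℝ) - (n:ℝ)) / (Ln n:ℝ)) atTop (𝓝 (1 - 1/c)) := by
    have := (tendsto_const_nhds : Tendsto (fun _ : ℕ => (1:ℝ)) atTop (𝓝 1)).sub hA
    apply this.congr'
    filter_upwards [hLn1] with n h1
    have hl' : (0:ℝ) < (Ln n : ℝ) := by exact_mod_cast h1
    field_simp
  -- limit of h
  have hq1' : Tendsto (fun n : ℕ => (((n-1).choose 3:ℝ) / (n.choose 3:ℝ)) ^ (Ln n))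
      atTop (𝓝 (Real.exp (-(3 * ((1:ℕ):ℝ)) * c))) := hq1
  have htot : Tendsto h atTop (𝓝 ((1/c) * Real.exp (-(3 * ((1:ℕ):ℝ)) * c)
      + 3 * Real.exp (-(3 * ((2:ℕ):ℝ)) * c) - Real.exp (-(3 * ((3:ℕ):ℝ)) * c)
      + (1 - 1/c))) := by
    exact ((((hA.mul hq1').add (hq2.const_mul 3)).sub hq3).add hB)
  have htot' : Tendsto (fun n => 1 - h n) atTop (𝓝 (1 - ((1/c) * Real.exp (-(3 * ((1:ℕ):ℝ)) * c)
      + 3 * Real.exp (-(3 * ((2:ℕ):ℝ)) * c) - Real.exp (-(3 * ((3:ℕ):ℝ)) * c)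
      + (1 - 1/c)))) := tendsto_const_nhds.sub htot
  -- eventual bound
  have hev : ∀ᶠ n : ℕ in atTop, Prank n (Ln n) 3 (Ln n) ≤ 1 - h n := by
    filter_upwards [hLn1, eventually_ge_atTop 3] with n h1 h2
    have := master n (Ln n) h1 h2
    rwa [raw_eq n (Ln n) h1 h2] at this
  -- limsup
  have hbd : IsBoundedUnder (· ≤ ·) atTop (fun n => 1 - h n) := htot'.isBoundedUnder_le
  have hcb : IsCoboundedUnder (· ≤ ·) atTop (fun n : ℕ => Prank n (Ln n) 3 (Ln n)) := by
    apply IsBoundedUnder.isCoboundedUnder_le (isBoundedUnder_of ⟨0, fun n => ?_⟩)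
    unfold Prank
    positivity
  calc limsup (fun n : ℕ => Prank n (Ln n) 3 (Ln n)) atTop
      ≤ limsup (fun n => 1 - h n) atTop := limsup_le_limsup hev hcb hbd
    _ = 1 - ((1/c) * Real.exp (-(3 * ((1:ℕ):ℝ)) * c)
      + 3 * Real.exp (-(3 * ((2:ℕ):ℝ)) * c) - Real.exp (-(3 * ((3:ℕ):ℝ)) * c)
      + (1 - 1/c)) := htot'.limsup_eq
    _ = 1 - (Real.exp (-3 * c) + 3 * c * Real.exp (-6 * c) - c * Real.exp (-9 * c)
        - 1 + c) / c := by
      push_cast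
      have e1 : -(3 * (1:ℝ)) * c = -3 * c := by ring
      have e2 : -(3 * (2:ℝ)) * c = -6 * c := by ring
      have e3 : -(3 * (3:ℝ)) * c = -9 * c := by ring
      rw [e1, e2, e3]
      field_simp
      ring
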